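/- Let A be a unital C*-algebra, let u ∈ A be a unitary, and let s ∈ A be an isometry with range projection e = s·s*. Then for every unitary v ∈ A, ‖u − (e·u·e + (1−e)·u·(1−e))‖ ≤ (2·‖s*·u·s − v‖)^(1/2). -/

import Mathlib

section aux

variable {A : Type*} [NormedRing A] [StarRing A] [CStarRing A] [CompleteSpace A]
    [NormedAlgebra ℂ A] [StarModule ℂ A]

omit [CompleteSpace A] [NormedAlgebra ℂ A] [StarModule ℂ A] in
/-- Left multiplication by an isometry preserves norm. -/
lemma stmt13_norm_isometry_mul (s a : A) (hs : star s * s = 1) : ‖s * a‖ = ‖a‖ := by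
  have h : ‖s * a‖ * ‖s * a‖ = ‖a‖ * ‖a‖ := by
    rw [← CStarRing.norm_star_mul_self, ← CStarRing.norm_star_mul_self (x := a)]
    congr 1
    rw [star_mul, mul_assoc, ← mul_assoc (star s) s a, hs, one_mul]
  exact mul_self_inj_of_nonneg (norm_nonneg _) (norm_nonneg _) |>.mp h

omit [CompleteSpace A] [NormedAlgebra ℂ A] [StarModule ℂ A] in
/-- Right multiplication by a coisometry preserves norm. -/
lemma stmt13_norm_mul_isometry (s a : A) (hs : s * star s = 1) : ‖a * s‖ = ‖a‖ := by
  have := stmt13_norm_isometry_mul (star s) (star a) (by simpa using hs)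
  rw [← norm_star (a * s), star_mul]
  simpa using this

end aux

/-- A nonnegative real multiple of an element of the form `star p * p = p` is nonnegative. -/
lemma stmt13_smul_proj_nonneg {A : Type*} [Ring A] [StarRing A] [PartialOrder A]
    [StarOrderedRing A] [Module ℝ A]
    [StarModule ℝ A] [IsScalarTower ℝ A A] [SMulCommClass ℝ A A]
    (c : ℝ) (hc : 0 ≤ c) (p : A) (hp : star p * p = p) : (0 : A) ≤ c • p := by
  have h : c • p = star (Real.sqrt c • p) * (Real.sqrt c • p) := by
    rw [star_smul, star_trivial, smul_mul_smul_comm, Real.mul_self_sqrt hc, hp]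
  rw [h]
  exact star_mul_self_nonneg _

/-- Let `u` be a unitary and `s` an isometry with range projection
`e = s·s*` in a unital C*-algebra.  Then for every unitary `v`,
`‖u − (e·u·e + (1−e)·u·(1−e))‖ ≤ (2·‖s*·u·s − v‖)^(1/2)`. -/
theorem stmt_13 {A : Type*} [NormedRing A] [StarRing A] [CStarRing A] [CompleteSpace A]
    [NormedAlgebra ℂ A] [StarModule ℂ A]
    (u s : A) (hu : u ∈ unitary A) (hs : star s * s = 1)
    (e : A) (he : e = s * star s)
    (v : A) (hv : v ∈ unitary A) :
    ‖u - (e * u * e + (1 - e) * u * (1 - e))‖ ≤ Real.sqrt (2 * ‖star s * u * s - v‖) := by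
  rcases subsingleton_or_nontrivial A with hA | hA
  · rw [Subsingleton.elim (u - (e * u * e + (1 - e) * u * (1 - e))) 0, norm_zero]
    exact Real.sqrt_nonneg _
  letI : CStarAlgebra A := ⟨⟩
  letI := CStarAlgebra.spectralOrder A
  haveI := CStarAlgebra.spectralOrderedRing A
  obtain ⟨hu1, hu2⟩ := Unitary.mem_iff.mp hu
  obtain ⟨hv1, hv2⟩ := Unitary.mem_iff.mp hv
  obtain ⟨w, hw⟩ : ∃ w, star s * u * s - v = w := ⟨_, rfl⟩
  rw [hw]
  have hwnn : (0:ℝ) ≤ 2 * ‖w‖ := by positivity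
  have hwv : star s * u * s = v + w := by rw [← hw]; abel
  have he2 : e * e = e := by
    rw [he, mul_assoc, ← mul_assoc (star s), hs, one_mul]
  have hestar : star e = e := by rw [he]; simp [star_mul]
  have hes : star s * (1 - e) = 0 := by
    rw [he, mul_sub, mul_one, ← mul_assoc, hs, one_mul, sub_self]
  have hse : (1 - e) * s = 0 := by
    rw [he, sub_mul, one_mul, mul_assoc, hs, mul_one, sub_self]
  have he1e : e * (1 - e) = 0 := by rw [mul_sub, mul_one, he2, sub_self]
  have h1ee : (1 - e) * e = 0 := by rw [sub_mul, one_mul, he2, sub_self]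
  have hp : ((1:A) - e) * ((1:A) - e) = 1 - e := by
    rw [sub_mul, mul_sub, mul_sub, one_mul, mul_one, he2]; noncomm_ring
  have hps : star ((1:A) - e) = 1 - e := by rw [star_sub, star_one, hestar]
  have hnorm1e : ‖(1:A) - e‖ ≤ 1 := by
    have h : ‖(1:A) - e‖ * ‖(1:A) - e‖ = ‖(1:A) - e‖ := by
      rw [← CStarRing.norm_star_mul_self, hps, hp]
    nlinarith [norm_nonneg ((1:A) - e)]
  -- first defect : d1 = u*s - s*v
  have hd1 : ‖u * s - s * v‖ ≤ Real.sqrt (2 * ‖w‖) := by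
    have e1 : star (u * s - s * v) * (u * s - s * v)
        = -(star w * v + star v * w) := by
      have h1 : star s * star u * (u * s) = 1 := by
        rw [mul_assoc, ← mul_assoc (star u), hu1, one_mul, hs]
      have h2 : star v * star s * (s * v) = 1 := by
        rw [mul_assoc, ← mul_assoc (star s), hs, one_mul, hv1]
      have h3 : star s * star u * s = star v + star w := by
        have := congrArg star hwv
        simpa [star_mul, ← mul_assoc] using this
      have h4 : star v * (star s * u * s) = star v * (v + w) := by rw [hwv]
      calc star (u * s - s * v) * (u * s - s * v)
          = star s * star u * (u * s) - (star s * star u * s) * v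
            - star v * (star s * u * s) + star v * star s * (s * v) := by
            simp only [star_sub, star_mul]; noncomm_ring
        _ = 1 - (star v + star w) * v - star v * (v + w) + 1 := by rw [h1, h2, h3, h4]
        _ = -(star w * v + star v * w) + (1 - star v * v) + (1 - star v * v) := by
            noncomm_ring
        _ = -(star w * v + star v * w) := by rw [hv1]; noncomm_ring
    refine Real.le_sqrt_of_sq_le ?_
    calc ‖u * s - s * v‖ ^ 2 = ‖star (u * s - s * v) * (u * s - s * v)‖ := by
          rw [CStarRing.norm_star_mul_self, sq]
      _ = ‖star w * v + star v * w‖ := by rw [e1, norm_neg]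
      _ ≤ ‖star w * v‖ + ‖star v * w‖ := norm_add_le _ _
      _ = 2 * ‖w‖ := by
          rw [CStarRing.norm_mul_mem_unitary _ hv, norm_star,
            CStarRing.norm_mem_unitary_mul _ (Unitary.star_mem hv)]
          ring
  -- second defect : d2 = u⋆*s - s*v⋆
  have hd2 : ‖star u * s - s * star v‖ ≤ Real.sqrt (2 * ‖w‖) := by
    have e1 : star (star u * s - s * star v) * (star u * s - s * star v)
        = -(w * star v + v * star w) := by
      have h1 : star s * u * (star u * s) = 1 := by
        rw [mul_assoc, ← mul_assoc u, hu2, one_mul, hs]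
      have h2 : v * star s * (s * star v) = 1 := by
        rw [mul_assoc, ← mul_assoc (star s), hs, one_mul, hv2]
      have h3 : star s * u * s * star v = (v + w) * star v := by rw [hwv]
      have h4 : v * (star s * star u * s) = v * (star v + star w) := by
        have h3' : star s * star u * s = star v + star w := by
          have := congrArg star hwv
          simpa [star_mul, ← mul_assoc] using this
        rw [h3']
      calc star (star u * s - s * star v) * (star u * s - s * star v)
          = star s * u * (star u * s) - star s * u * s * star v
            - v * (star s * star u * s) + v * star s * (s * star v) := by
            simp only [star_sub, star_mul, star_star]; noncomm_ring
        _ = 1 - (v + w) * star v - v * (star v + star w) + 1 := by rw [h1, h2, h3, h4]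
        _ = -(w * star v + v * star w) + (1 - v * star v) + (1 - v * star v) := by
            noncomm_ring
        _ = -(w * star v + v * star w) := by rw [hv2]; noncomm_ring
    refine Real.le_sqrt_of_sq_le ?_
    calc ‖star u * s - s * star v‖ ^ 2
        = ‖star (star u * s - s * star v) * (star u * s - s * star v)‖ := by
          rw [CStarRing.norm_star_mul_self, sq]
      _ = ‖w * star v + v * star w‖ := by rw [e1, norm_neg]
      _ ≤ ‖w * star v‖ + ‖v * star w‖ := norm_add_le _ _
      _ = 2 * ‖w‖ := by
          rw [CStarRing.norm_mul_mem_unitary _ (Unitary.star_mem hv),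
            CStarRing.norm_mem_unitary_mul _ hv, norm_star]
          ring
  -- the two off-diagonal corners
  set x : A := e * u * (1 - e) with hx
  set y : A := (1 - e) * u * e with hy
  have hxnorm : ‖x‖ ≤ Real.sqrt (2 * ‖w‖) := by
    have hx1 : x = s * (star s * u * (1 - e)) := by
      rw [hx, he]; noncomm_ring
    have hx2 : star s * u * (1 - e) = (star s * u - v * star s) * (1 - e) := by
      have h0 : v * star s * (1 - e) = 0 := by rw [mul_assoc, hes, mul_zero]
      rw [sub_mul, h0, sub_zero]
    have hx3 : star s * u - v * star s = star (star u * s - s * star v) := by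
      simp [star_sub, star_mul]
    calc ‖x‖ = ‖star s * u * (1 - e)‖ := by rw [hx1, stmt13_norm_isometry_mul _ _ hs]
      _ ≤ ‖star s * u - v * star s‖ * ‖(1:A) - e‖ := by rw [hx2]; exact norm_mul_le _ _
      _ ≤ ‖star u * s - s * star v‖ * 1 := by
          rw [hx3, norm_star]
          exact mul_le_mul_of_nonneg_left hnorm1e (norm_nonneg _)
      _ ≤ Real.sqrt (2 * ‖w‖) := by rw [mul_one]; exact hd2
  have hynorm : ‖y‖ ≤ Real.sqrt (2 * ‖w‖) := by
    have hy1 : y = ((1 - e) * u * s) * star s := by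
      rw [hy, he]; noncomm_ring
    have hy2 : (1 - e) * u * s = (1 - e) * (u * s - s * v) := by
      have h0 : (1 - e) * (s * v) = 0 := by rw [← mul_assoc, hse, zero_mul]
      rw [mul_sub, h0, sub_zero, mul_assoc]
    calc ‖y‖ = ‖(1 - e) * u * s‖ := by
          rw [hy1, stmt13_norm_mul_isometry _ _ (by simpa using hs)]
      _ ≤ ‖(1:A) - e‖ * ‖u * s - s * v‖ := by rw [hy2]; exact norm_mul_le _ _
      _ ≤ 1 * ‖u * s - s * v‖ := mul_le_mul_of_nonneg_right hnorm1e (norm_nonneg _)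
      _ ≤ Real.sqrt (2 * ‖w‖) := by rw [one_mul]; exact hd1
  -- the element whose norm we estimate is x + y
  have hz : u - (e * u * e + (1 - e) * u * (1 - e)) = x + y := by
    rw [hx, hy]; noncomm_ring
  -- orthogonality
  have hcross1 : star x * y = 0 := by
    have h : star x * y = ((1 - e) * star u) * (e * (1 - e)) * (u * e) := by
      rw [hx, hy, star_mul, star_mul, hestar, hps]
      noncomm_ring
    rw [h, he1e, mul_zero, zero_mul]
  have hcross2 : star y * x = 0 := by
    have h : star y * x = (e * star u) * ((1 - e) * e) * (u * (1 - e)) := by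
      rw [hx, hy, star_mul, star_mul, hestar, hps]
      noncomm_ring
    rw [h, h1ee, mul_zero, zero_mul]
  have hsum : star (x + y) * (x + y) = star x * x + star y * y := by
    rw [star_add, add_mul, mul_add, mul_add, hcross1, hcross2, add_zero, zero_add]
  -- positivity estimates
  have hx2w : ‖star x * x‖ ≤ 2 * ‖w‖ := by
    rw [CStarRing.norm_star_mul_self]
    calc ‖x‖ * ‖x‖ ≤ Real.sqrt (2 * ‖w‖) * Real.sqrt (2 * ‖w‖) :=
          mul_le_mul hxnorm hxnorm (norm_nonneg _) (Real.sqrt_nonneg _)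
      _ = 2 * ‖w‖ := Real.mul_self_sqrt hwnn
  have hy2w : ‖star y * y‖ ≤ 2 * ‖w‖ := by
    rw [CStarRing.norm_star_mul_self]
    calc ‖y‖ * ‖y‖ ≤ Real.sqrt (2 * ‖w‖) * Real.sqrt (2 * ‖w‖) :=
          mul_le_mul hynorm hynorm (norm_nonneg _) (Real.sqrt_nonneg _)
      _ = 2 * ‖w‖ := Real.mul_self_sqrt hwnn
  have hxle : star x * x ≤ (2 * ‖w‖) • ((1:A) - e) := by
    have hxx : x * (1 - e) = x := by rw [hx, mul_assoc, hp]
    have h5 : star x * x = star ((1:A) - e) * (star x * x) * ((1:A) - e) := by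
      conv_lhs => rw [← hxx, star_mul]
      rw [hps]; noncomm_ring
    calc star x * x ≤ ‖star x * x‖ • (star ((1:A) - e) * ((1:A) - e)) := by
          conv_lhs => rw [h5]
          exact CStarAlgebra.star_left_conjugate_le_norm_smul (IsSelfAdjoint.star_mul_self x)
      _ = ‖star x * x‖ • ((1:A) - e) := by rw [hps, hp]
      _ ≤ (2 * ‖w‖) • ((1:A) - e) := by
          have hd : (0:A) ≤ (2 * ‖w‖ - ‖star x * x‖) • ((1:A) - e) :=
            stmt13_smul_proj_nonneg _ (by linarith) _ (by rw [hps, hp])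
          have := add_le_add_left hd (‖star x * x‖ • ((1:A) - e))
          simpa [sub_smul] using this
  have hyle : star y * y ≤ (2 * ‖w‖) • e := by
    have hyy : y * e = y := by rw [hy, mul_assoc, he2]
    have h5 : star y * y = star e * (star y * y) * e := by
      conv_lhs => rw [← hyy, star_mul]
      rw [hestar]; noncomm_ring
    calc star y * y ≤ ‖star y * y‖ • (star e * e) := by
          conv_lhs => rw [h5]
          exact CStarAlgebra.star_left_conjugate_le_norm_smul (IsSelfAdjoint.star_mul_self y)
      _ = ‖star y * y‖ • e := by rw [hestar, he2]
      _ ≤ (2 * ‖w‖) • e := by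
          have hd : (0:A) ≤ (2 * ‖w‖ - ‖star y * y‖) • e :=
            stmt13_smul_proj_nonneg _ (by linarith) _ (by rw [hestar, he2])
          have := add_le_add_left hd (‖star y * y‖ • e)
          simpa [sub_smul] using this
  -- combine
  have hfin : star (x + y) * (x + y) ≤ algebraMap ℝ A (2 * ‖w‖) := by
    rw [hsum]
    have h1 : algebraMap ℝ A (2 * ‖w‖) = (2 * ‖w‖) • ((1:A) - e) + (2 * ‖w‖) • e := by
      rw [← smul_add, sub_add_cancel, Algebra.algebraMap_eq_smul_one]
    rw [h1]
    exact add_le_add hxle hyle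
  have hnormfin : ‖star (x + y) * (x + y)‖ ≤ 2 * ‖w‖ :=
    (CStarAlgebra.norm_le_iff_le_algebraMap _ hwnn (star_mul_self_nonneg _)).mpr hfin
  rw [hz]
  refine Real.le_sqrt_of_sq_le ?_
  calc ‖x + y‖ ^ 2 = ‖star (x + y) * (x + y)‖ := by rw [CStarRing.norm_star_mul_self, sq]
    _ ≤ 2 * ‖w‖ := hnormfin
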